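/- If 1 < β < G where G = (1+√5)/2 is the golden ratio, then every x ∈ (0, 1/(β-1)) has at least two distinct representations of the form x = Σ_{n≥1} ε_n β^{-n} with ε_n ∈ {0,1}. (In fact it has continuum many, but two distinct ones suffice to state non-uniqueness.) -/

import Mathlib

open Finset Filter
open scoped Classical

/-- Remainder sequence of the greedy algorithm. -/
noncomputable def greedyR (β y : ℝ) : ℕ → ℝ
  | 0 => y
  | n+1 => β * greedyR β y n - (if 1 ≤ β * greedyR β y n then 1 else 0)

/-- Digit sequence of the greedy algorithm. -/
noncomputable def greedyD (β y : ℝ) (n : ℕ) : ℕ :=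
  if 1 ≤ β * greedyR β y n then 1 else 0

lemma greedyD_le (β y : ℝ) (n : ℕ) : greedyD β y n ≤ 1 := by
  unfold greedyD; split_ifs <;> simp

lemma greedyR_succ (β y : ℝ) (n : ℕ) :
    greedyR β y (n+1) = β * greedyR β y n - (greedyD β y n : ℝ) := by
  rw [greedyR, greedyD]; split_ifs <;> simp

lemma aux_summable (β : ℝ) (hβ1 : 1 < β) (d : ℕ → ℕ) (hd : ∀ n, d n ≤ 1) :
    Summable (fun n => (d n : ℝ) / β ^ (n+1)) := by
  have hβ0 : (0:ℝ) < β := lt_trans one_pos hβ1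
  have hg : Summable (fun n : ℕ => (1/β)^n) :=
    summable_geometric_of_lt_one (by positivity) (by rw [div_lt_one hβ0]; exact hβ1)
  refine hg.of_nonneg_of_le (fun n => by positivity) (fun n => ?_)
  have h1 : (d n : ℝ) ≤ 1 := by exact_mod_cast hd n
  have h2 : β^n ≤ β^(n+1) := pow_le_pow_right₀ (le_of_lt hβ1) (by omega)
  have h3 : (0:ℝ) < β^n := by positivity
  rw [div_pow, one_pow]
  calc (d n : ℝ) / β^(n+1) ≤ 1 / β^(n+1) :=
        div_le_div_of_nonneg_right h1 (by positivity) |>.trans_eq rfl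
    _ ≤ 1 / β^n := one_div_le_one_div_of_le h3 h2

lemma greedyR_mem (β y : ℝ) (hβ1 : 1 < β) (hβ2 : β < 2)
    (hy0 : 0 ≤ y) (hyM : y ≤ 1/(β-1)) (n : ℕ) :
    0 ≤ greedyR β y n ∧ greedyR β y n ≤ 1/(β-1) := by
  have hb : (0:ℝ) < β - 1 := by linarith
  induction n with
  | zero => exact ⟨hy0, hyM⟩
  | succ n ih =>
    rw [greedyR]
    split_ifs with h
    · constructor
      · linarith
      · have : β * greedyR β y n ≤ β * (1/(β-1)) :=
          mul_le_mul_of_nonneg_left ih.2 (by linarith)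
        have hβM : β * (1/(β-1)) = 1/(β-1) + 1 := by field_simp; ring
        linarith
    · push_neg at h
      have h0 : 0 ≤ β * greedyR β y n := mul_nonneg (by linarith) ih.1
      have hM1 : (1:ℝ) ≤ 1/(β-1) := by
        rw [le_div_iff₀ hb]; linarith
      simp only [sub_zero]
      exact ⟨h0, by linarith⟩

lemma greedy_partial (β y : ℝ) (hβ1 : 1 < β) (n : ℕ) :
    y = (∑ i ∈ Finset.range n, (greedyD β y i : ℝ) / β^(i+1)) + greedyR β y n / β^n := by
  have hβ0 : (β:ℝ) ≠ 0 := by positivity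
  induction n with
  | zero => simp [greedyR]
  | succ n ih =>
    have hpn : (β:ℝ)^n ≠ 0 := pow_ne_zero _ hβ0
    have hpn1 : (β:ℝ)^(n+1) ≠ 0 := pow_ne_zero _ hβ0
    have key : greedyR β y n / β^n
        = (greedyD β y n : ℝ)/β^(n+1) + greedyR β y (n+1)/β^(n+1) := by
      rw [greedyR_succ]; field_simp; ring
    rw [Finset.sum_range_succ]
    linarith [ih, key]

/-- The greedy algorithm represents every `y ∈ [0, 1/(β-1)]`. -/
lemma greedy_rep (β : ℝ) (hβ1 : 1 < β) (hβ2 : β < 2) (y : ℝ)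
    (hy0 : 0 ≤ y) (hyM : y ≤ 1/(β-1)) :
    y = ∑' n : ℕ, (greedyD β y n : ℝ) / β^(n+1) := by
  have hβ0 : (0:ℝ) < β := lt_trans one_pos hβ1
  have hd : ∀ n, greedyD β y n ≤ 1 := fun n => greedyD_le β y n
  have hs : Summable (fun n => (greedyD β y n : ℝ) / β^(n+1)) :=
    aux_summable β hβ1 _ hd
  have h1 : Tendsto (fun n => ∑ i ∈ Finset.range n, (greedyD β y i : ℝ) / β^(i+1))
      atTop (nhds (∑' n : ℕ, (greedyD β y n : ℝ) / β^(n+1))) :=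
    hs.hasSum.tendsto_sum_nat
  have hr0 : Tendsto (fun n => greedyR β y n / β^n) atTop (nhds 0) := by
    have hginv : Tendsto (fun n : ℕ => (1/(β-1)) * (1/β)^n) atTop (nhds 0) := by
      have := tendsto_pow_atTop_nhds_zero_of_lt_one
        (le_of_lt (by positivity : (0:ℝ) < 1/β))
        (by rw [div_lt_one hβ0]; exact hβ1)
      simpa using this.const_mul (1/(β-1))
    apply squeeze_zero (fun n => ?_) (fun n => ?_) hginv
    · exact div_nonneg (greedyR_mem β y hβ1 hβ2 hy0 hyM n).1 (by positivity)
    · have := (greedyR_mem β y hβ1 hβ2 hy0 hyM n).2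
      have h : (1/(β-1)) * (1/β)^n = (1/(β-1)) / β^n := by
        rw [div_pow, one_pow, mul_one_div, div_div]
      rw [h]
      exact div_le_div_of_nonneg_right this (by positivity)
  have h2 : Tendsto (fun n => ∑ i ∈ Finset.range n, (greedyD β y i : ℝ) / β^(i+1))
      atTop (nhds y) := by
    have : (fun n => ∑ i ∈ Finset.range n, (greedyD β y i : ℝ) / β^(i+1))
        = fun n => y - greedyR β y n / β^n := by
      funext n
      have := greedy_partial β y hβ1 n
      linarith
    rw [this]
    simpa using tendsto_const_nhds.sub hr0
  exact tendsto_nhds_unique h2 h1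

/-- From `y ∈ (0, 1/β)`, multiplying by a power of `β` lands in `[1/β, 1)`. -/
lemma zeros_lemma (β y : ℝ) (hβ1 : 1 < β) (hy0 : 0 < y) (hy1 : y < 1/β) :
    ∃ n : ℕ, 1/β ≤ β^n * y ∧ β^n * y < 1 := by
  have hβ0 : (0:ℝ) < β := lt_trans one_pos hβ1
  have hex : ∃ n : ℕ, 1/β ≤ β^n * y := by
    obtain ⟨n, hn⟩ := (tendsto_pow_atTop_atTop_of_one_lt hβ1 |>.eventually_ge_atTop
      ((1/β)/y)).exists
    exact ⟨n, by rw [div_le_iff₀ hy0] at hn; linarith⟩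
  classical
  let n := Nat.find hex
  have hn : 1/β ≤ β^n * y := Nat.find_spec hex
  have hne : n ≠ 0 := by
    intro h
    have := hn
    rw [h] at this
    simp only [pow_zero, one_mul] at this
    linarith [lt_of_lt_of_le hy1 this]
  obtain ⟨m, hm⟩ := Nat.exists_eq_succ_of_ne_zero hne
  have hprev : ¬ (1/β ≤ β^m * y) := Nat.find_min hex (by omega)
  push_neg at hprev
  refine ⟨n, hn, ?_⟩
  have : β^n * y = β * (β^m * y) := by rw [hm, pow_succ]; ring
  rw [this]
  calc β * (β^m * y) < β * (1/β) := by
        apply mul_lt_mul_of_pos_left hprev hβ0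
    _ = 1 := by field_simp

/-- Partial identity for a prefix of `n` digits equal to `1`. -/
lemma ones_partial (β y : ℝ) (hβ1 : 1 < β) (n : ℕ) :
    y = (∑ i ∈ Finset.range n, (1:ℝ)/β^(i+1)) + (β^n * (y - 1/(β-1)) + 1/(β-1)) / β^n := by
  have hβ0 : (β:ℝ) ≠ 0 := by positivity
  have hb : (β:ℝ) - 1 ≠ 0 := by intro h; nlinarith
  induction n with
  | zero => simp
  | succ n ih =>
    rw [Finset.sum_range_succ]
    have hpn : (β:ℝ)^n ≠ 0 := pow_ne_zero _ hβ0
    have key : (β^n * (y - 1/(β-1)) + 1/(β-1)) / β^n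
        = 1/β^(n+1) + (β^(n+1) * (y - 1/(β-1)) + 1/(β-1)) / β^(n+1) := by
      field_simp
      ring
    linarith [ih, key]

/-- Every `y ∈ (0, 1/(β-1))` can be written as a finite digit prefix plus a
value in the branching interval `[1/β, (1/(β-1))/β]`. -/
lemma prefix_lemma (β : ℝ) (hβ1 : 1 < β) (hβ2 : β < 2) (hβsq : β^2 < β + 1)
    (y : ℝ) (hy0 : 0 < y) (hyM : y < 1/(β-1)) :
    ∃ (k : ℕ) (d : ℕ → ℕ) (z : ℝ), (∀ i, d i ≤ 1) ∧ 1/β ≤ z ∧ z ≤ (1/(β-1))/β ∧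
      y = (∑ i ∈ Finset.range k, (d i : ℝ)/β^(i+1)) + z/β^k := by
  have hβ0 : (0:ℝ) < β := lt_trans one_pos hβ1
  have hb : (0:ℝ) < β - 1 := by linarith
  set M : ℝ := 1/(β-1) with hM
  have hβM : β < M := by
    rw [hM, lt_div_iff₀ hb]; nlinarith
  have hM1 : 1 < M := by rw [hM, lt_div_iff₀ hb]; linarith
  have h1M : (1:ℝ) ≤ M/β := by rw [le_div_iff₀ hβ0]; linarith
  have hbM : β * M = M + 1 := by rw [hM]; field_simp; ring
  rcases lt_or_ge y (1/β) with hcase | hcase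
  · -- y < 1/β : pad with zeros
    obtain ⟨n, hn1, hn2⟩ := zeros_lemma β y hβ1 hy0 hcase
    refine ⟨n, fun _ => 0, β^n * y, fun i => le_refl 0 |>.trans zero_le_one, hn1,
      le_trans (le_of_lt hn2) h1M, ?_⟩
    have hpn : (β:ℝ)^n ≠ 0 := by positivity
    simp only [Nat.cast_zero, zero_div, Finset.sum_const_zero, zero_add]
    field_simp
  rcases le_or_gt y (M/β) with hcase2 | hcase2
  · exact ⟨0, fun _ => 0, y, fun i => zero_le_one, hcase, hcase2, by simp⟩
  · -- y > M/β : forced ones for a while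
    have hex : ∃ n : ℕ, β^n * (y - M) + M ≤ M/β := by
      have hMy : 0 < M - y := by linarith
      obtain ⟨n, hn⟩ := (tendsto_pow_atTop_atTop_of_one_lt hβ1 |>.eventually_ge_atTop
        ((M - M/β)/(M - y))).exists
      refine ⟨n, ?_⟩
      rw [div_le_iff₀ hMy] at hn
      nlinarith
    let n := Nat.find hex
    have hn : β^n * (y - M) + M ≤ M/β := Nat.find_spec hex
    have hne : n ≠ 0 := by
      intro h
      have := hn
      rw [h] at this
      simp only [pow_zero, one_mul] at this
      linarith
    obtain ⟨m, hm⟩ := Nat.exists_eq_succ_of_ne_zero hne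
    have hprev : ¬ (β^m * (y - M) + M ≤ M/β) := Nat.find_min hex (by omega)
    push_neg at hprev
    set yn : ℝ := β^n * (y - M) + M with hyn
    have hrec : yn = β * (β^m * (y - M) + M) - 1 := by
      rw [hyn, hm, pow_succ]; nlinarith [hbM]
    have hynpos : 0 < yn := by
      rw [hrec]
      have : β * (β^m * (y - M) + M) > β * (M/β) := by
        apply mul_lt_mul_of_pos_left hprev hβ0
      have hMb : β * (M/β) = M := by field_simp
      nlinarith
    have hid : y = (∑ i ∈ Finset.range n, (1:ℝ)/β^(i+1)) + yn/β^n :=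
      ones_partial β y hβ1 n
    rcases le_or_gt (1/β) yn with hsub | hsub
    · -- done: yn is already in the overlap
      refine ⟨n, fun _ => 1, yn, fun i => le_refl 1, hsub, hn, ?_⟩
      rw [hid]
      congr 1
      exact Finset.sum_congr rfl (fun i _ => by norm_num)
    · -- yn < 1/β : pad further with zeros
      obtain ⟨mm, hmm1, hmm2⟩ := zeros_lemma β yn hβ1 hynpos hsub
      refine ⟨n + mm, fun i => if i < n then 1 else 0, β^mm * yn,
        fun i => by simp only []; split_ifs <;> simp, hmm1, le_trans (le_of_lt hmm2) h1M, ?_⟩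
      have hsum : ∑ i ∈ Finset.range (n + mm),
          ((if i < n then (1:ℕ) else 0 : ℕ) : ℝ)/β^(i+1)
          = ∑ i ∈ Finset.range n, (1:ℝ)/β^(i+1) := by
        rw [← Finset.sum_subset (Finset.range_subset_range.2 (Nat.le_add_right n mm))]
        · exact Finset.sum_congr rfl (fun i hi => by
            rw [if_pos (Finset.mem_range.1 hi)]; norm_num)
        · intro i hi hni
          rw [Finset.mem_range] at hni
          push_neg at hni
          rw [if_neg (by omega)]
          norm_num
      rw [hsum, hid]
      congr 1
      have hpn : (β:ℝ)^n ≠ 0 := by positivity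
      have hpm : (β:ℝ)^mm ≠ 0 := by positivity
      rw [pow_add]
      field_simp

/-- Splicing a digit prefix, one extra digit `b`, and the tail representation `e`. -/
lemma assemble (β : ℝ) (hβ1 : 1 < β) (k : ℕ) (d e : ℕ → ℕ) (b : ℕ)
    (hd : ∀ n, d n ≤ 1) (he : ∀ n, e n ≤ 1) (hb : b ≤ 1) :
    ∑' n : ℕ, ((if n < k then d n else if n = k then b else e (n - (k+1)) : ℕ) : ℝ) / β^(n+1)
      = (∑ i ∈ Finset.range k, (d i : ℝ)/β^(i+1))
        + ((b : ℝ) + ∑' n : ℕ, (e n : ℝ)/β^(n+1)) / β^(k+1) := by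
  have hβ0 : (0:ℝ) < β := lt_trans one_pos hβ1
  set f : ℕ → ℕ := fun n => if n < k then d n else if n = k then b else e (n - (k+1)) with hf
  have hfle : ∀ n, f n ≤ 1 := by
    intro n
    rw [hf]
    simp only []
    split_ifs
    · exact hd n
    · exact hb
    · exact he _
  have hs : Summable (fun n => (f n : ℝ) / β^(n+1)) := aux_summable β hβ1 f hfle
  rw [← hs.sum_add_tsum_nat_add (k+1), Finset.sum_range_succ]
  have h1 : ∑ i ∈ Finset.range k, (f i : ℝ)/β^(i+1)
      = ∑ i ∈ Finset.range k, (d i : ℝ)/β^(i+1) := by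
    refine Finset.sum_congr rfl (fun i hi => ?_)
    rw [hf]; simp only [if_pos (Finset.mem_range.1 hi)]
  have h2 : (f k : ℝ) = (b : ℝ) := by
    rw [hf]; simp
  have h3 : ∀ m : ℕ, ((f (m + (k+1)) : ℕ) : ℝ)/β^((m + (k+1))+1)
      = ((e m : ℝ)/β^(m+1))/β^(k+1) := by
    intro m
    have hfm : f (m + (k+1)) = e m := by
      rw [hf]
      simp only []
      rw [if_neg (by omega), if_neg (by omega)]
      congr 1
      omega
    rw [hfm]
    have hpow : (β:ℝ)^((m + (k+1))+1) = β^(m+1) * β^(k+1) := by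
      rw [← pow_add]; congr 1; omega
    rw [hpow, div_div]
  rw [tsum_congr h3, tsum_div_const, h1, h2]
  ring

/-- if `1 < β < G` with `G = (1+√5)/2`, then every `x ∈ (0, 1/(β-1))` has at
least two distinct binary `β`-representations `x = Σ ε_n β^{-n}` with `ε_n ∈ {0,1}`. -/
theorem two_representations_below_golden_ratio
    (β : ℝ) (hβ1 : 1 < β) (hβG : β < (1 + Real.sqrt 5) / 2)
    (x : ℝ) (hx : x ∈ Set.Ioo (0 : ℝ) (1 / (β - 1))) :
    ∃ ε ε' : ℕ → ℕ, (∀ n, ε n ≤ 1) ∧ (∀ n, ε' n ≤ 1) ∧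
      x = ∑' n : ℕ, (ε n : ℝ) / β ^ (n + 1) ∧
      x = ∑' n : ℕ, (ε' n : ℝ) / β ^ (n + 1) ∧ ε ≠ ε' := by
  have hβ0 : (0:ℝ) < β := lt_trans one_pos hβ1
  have hb : (0:ℝ) < β - 1 := by linarith
  -- β² < β + 1
  have h5 : Real.sqrt 5 * Real.sqrt 5 = 5 := Real.mul_self_sqrt (by norm_num)
  have hβsq : β^2 < β + 1 := by
    have h2b : 2*β - 1 < Real.sqrt 5 := by linarith
    have h3 : (2*β-1)*(2*β-1) < Real.sqrt 5 * Real.sqrt 5 :=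
      mul_self_lt_mul_self (by linarith) h2b
    rw [h5] at h3
    nlinarith
  have hβ2 : β < 2 := by nlinarith
  obtain ⟨hx0, hxM⟩ := hx
  -- find the branch point
  obtain ⟨k, d, z, hd, hz1, hz2, hxeq⟩ := prefix_lemma β hβ1 hβ2 hβsq x hx0 hxM
  -- the two tails
  set w0 : ℝ := β * z with hw0
  set w1 : ℝ := β * z - 1 with hw1
  have hw0mem : 0 ≤ w0 ∧ w0 ≤ 1/(β-1) := by
    constructor
    · have : (0:ℝ) < 1/β := by positivity
      nlinarith
    · rw [hw0]
      calc β * z ≤ β * ((1/(β-1))/β) := mul_le_mul_of_nonneg_left hz2 (le_of_lt hβ0)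
        _ = 1/(β-1) := by field_simp
  have hw1mem : 0 ≤ w1 ∧ w1 ≤ 1/(β-1) := by
    constructor
    · rw [hw1]
      have : β * (1/β) ≤ β * z := mul_le_mul_of_nonneg_left hz1 (le_of_lt hβ0)
      have h1 : β * (1/β) = 1 := by field_simp
      linarith
    · rw [hw1]
      have := hw0mem.2
      rw [hw0] at this
      linarith
  have he0rep := greedy_rep β hβ1 hβ2 w0 hw0mem.1 hw0mem.2
  have he1rep := greedy_rep β hβ1 hβ2 w1 hw1mem.1 hw1mem.2
  set e0 : ℕ → ℕ := greedyD β w0 with he0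
  set e1 : ℕ → ℕ := greedyD β w1 with he1
  have he0le : ∀ n, e0 n ≤ 1 := fun n => greedyD_le β w0 n
  have he1le : ∀ n, e1 n ≤ 1 := fun n => greedyD_le β w1 n
  refine ⟨fun n => if n < k then d n else if n = k then 0 else e0 (n - (k+1)),
          fun n => if n < k then d n else if n = k then 1 else e1 (n - (k+1)),
          ?_, ?_, ?_, ?_, ?_⟩
  · intro n; simp only []; split_ifs
    · exact hd n
    · exact le_refl 0 |>.trans zero_le_one
    · exact he0le _
  · intro n; simp only []; split_ifs
    · exact hd n
    · exact le_refl 1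
    · exact he1le _
  · rw [assemble β hβ1 k d e0 0 hd he0le (by norm_num)]
    rw [← he0rep, hxeq]
    congr 1
    rw [hw0]
    have hpk : (β:ℝ)^k ≠ 0 := by positivity
    rw [pow_succ]
    field_simp
    ring
  · rw [assemble β hβ1 k d e1 1 hd he1le (le_refl 1)]
    rw [← he1rep, hxeq]
    congr 1
    rw [hw1]
    have hpk : (β:ℝ)^k ≠ 0 := by positivity
    rw [pow_succ]
    field_simp
    ring
  · intro h
    have := congrFun h k
    simp at this
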